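/- For $p > 2$ and $u, h \in L^p(\mathbb{R}^n)$, the function $t \mapsto |u+th|^{p-2}(u+th)$ satisfies the Fréchet differentiability estimate: $\||u+h|^{p-2}(u+h) - |u|^{p-2}u - (p-1)|u|^{p-2}h\|_{L^{p/(p-1)}} = o(\|h\|_{L^p})$ as $\|h\|_{L^p} \to 0$. -/

import Mathlib

open Real
open scoped ENNReal

/-- Derivative of `s ↦ |s|^q` away from 0. -/
lemma hasDerivAt_abs_rpow' {q : ℝ} {s : ℝ} (hs : s ≠ 0) :
    HasDerivAt (fun s : ℝ => |s| ^ q) (q * |s| ^ (q - 2) * s) s := by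
  rcases hs.lt_or_gt with h | h
  · -- s < 0 : |x| = -x locally
    have key : HasDerivAt (fun x : ℝ => (-x) ^ q) (q * (-s) ^ (q - 1) * (-1)) s := by
      exact (Real.hasDerivAt_rpow_const (p := q) (Or.inl (by linarith))).comp s (hasDerivAt_neg s)
    have heq : (fun x : ℝ => |x| ^ q) =ᶠ[nhds s] fun x : ℝ => (-x) ^ q := by
      filter_upwards [Iio_mem_nhds h] with x hx
      rw [abs_of_neg hx]
    have := key.congr_of_eventuallyEq heq
    refine this.congr_deriv (Eq.symm ?_)
    rw [abs_of_neg h]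
    have h1 : (-s) ^ (q - 1) = (-s) ^ (q - 2) * (-s) := by
      rw [← Real.rpow_add_one (by linarith : (-s) ≠ 0)]; ring_nf
    rw [h1]; ring
  · have key : HasDerivAt (fun x : ℝ => x ^ q) (q * s ^ (q - 1)) s :=
      Real.hasDerivAt_rpow_const (p := q) (Or.inl (by linarith))
    have heq : (fun x : ℝ => |x| ^ q) =ᶠ[nhds s] fun x : ℝ => x ^ q := by
      filter_upwards [Ioi_mem_nhds h] with x hx
      rw [abs_of_pos hx]
    have := key.congr_of_eventuallyEq heq
    refine this.congr_deriv (Eq.symm ?_)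
    rw [abs_of_pos h]
    have h1 : s ^ (q - 1) = s ^ (q - 2) * s := by
      rw [← Real.rpow_add_one (by linarith : s ≠ 0)]; ring_nf
    rw [h1]; ring

/-- Derivative of `s ↦ |s|^q * s` away from 0. -/
lemma hasDerivAt_abs_rpow'_mul {q : ℝ} {s : ℝ} (hs : s ≠ 0) :
    HasDerivAt (fun s : ℝ => |s| ^ q * s) ((q + 1) * |s| ^ q) s := by
  have := (hasDerivAt_abs_rpow' (q := q) hs).mul (hasDerivAt_id s)
  refine this.congr_deriv (Eq.symm ?_)
  have hss : s * s = |s| ^ (2 : ℝ) := by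
    rw [show ((2:ℝ) = ((2:ℕ):ℝ)) from by norm_num, Real.rpow_natCast]
    rw [sq_abs]; ring
  have h2 : |s| ^ (q - 2) * (s * s) = |s| ^ q := by
    rw [hss, ← Real.rpow_add (abs_pos.mpr hs)]; ring_nf
  simp only [id]
  linear_combination -q * h2

lemma rpow_window {p A x : ℝ} (hp : 2 < p) (hA : 0 < A) (h1 : A/2 ≤ x) (h2 : x ≤ 2*A) :
    x ^ (p-3) ≤ 2 ^ p * A ^ (p-3) := by
  have hx : 0 < x := lt_of_lt_of_le (by positivity) h1
  rcases le_or_gt 3 p with h3 | h3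
  · calc x ^ (p-3) ≤ (2*A) ^ (p-3) := Real.rpow_le_rpow hx.le h2 (by linarith)
    _ = 2 ^ (p-3) * A ^ (p-3) := Real.mul_rpow (by norm_num) hA.le
    _ ≤ 2 ^ p * A ^ (p-3) := by
        apply mul_le_mul_of_nonneg_right
          (Real.rpow_le_rpow_of_exponent_le one_le_two (by linarith))
          (Real.rpow_nonneg hA.le _)
  · calc x ^ (p-3) ≤ (A/2) ^ (p-3) :=
        Real.rpow_le_rpow_of_nonpos (by positivity) h1 (by linarith)
    _ = A ^ (p-3) * 2 ^ (3-p) := by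
        rw [Real.div_rpow hA.le (by norm_num), show (3-p) = -(p-3) by ring,
          Real.rpow_neg (by norm_num), div_eq_mul_inv]
    _ ≤ A ^ (p-3) * 2 ^ p := by
        apply mul_le_mul_of_nonneg_left
          (Real.rpow_le_rpow_of_exponent_le one_le_two (by linarith))
          (Real.rpow_nonneg hA.le _)
    _ = 2 ^ p * A ^ (p-3) := by ring

lemma key_far {p a b : ℝ} (hp : 2 < p) (hab : 2*|b| < |a|) :
    abs (|a+b| ^ (p-2) * (a+b) - |a| ^ (p-2) * a - (p-1) * |a| ^ (p-2) * b)
      ≤ (p-1) * (p-2) * 2 ^ p * (|a| ^ (p-3) * b ^ 2) := by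
  have ha : 0 < |a| := lt_of_le_of_lt (by positivity) hab
  rcases eq_or_ne b 0 with rfl | hb
  · simp
  -- bounds along the segment
  have hseg : ∀ t : ℝ, t ∈ Set.Icc (0:ℝ) 1 → |a|/2 ≤ |a + t*b| ∧ |a + t*b| ≤ 2*|a| := by
    intro t ht
    have h1 : |t*b| ≤ |b| := by
      rw [abs_mul, abs_of_nonneg ht.1]
      exact mul_le_of_le_one_left (abs_nonneg b) ht.2
    constructor
    · have := abs_sub_abs_le_abs_sub a (a + t*b)
      simp only [sub_add_cancel_left, abs_neg] at this
      linarith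
    · calc |a + t*b| ≤ |a| + |t*b| := abs_add_le _ _
      _ ≤ 2*|a| := by linarith
  have hne : ∀ t : ℝ, t ∈ Set.Icc (0:ℝ) 1 → a + t*b ≠ 0 := by
    intro t ht
    have := (hseg t ht).1
    intro h0; rw [h0, abs_zero] at this; linarith
  set g : ℝ → ℝ := fun t => |a + t*b| ^ (p-2) * (a + t*b) - t * ((p-1) * |a| ^ (p-2) * b)
    with hg
  set g' : ℝ → ℝ := fun t => (p-1) * |a + t*b| ^ (p-2) * b - (p-1) * |a| ^ (p-2) * b
    with hg'
  have hinner : ∀ t : ℝ, HasDerivAt (fun t : ℝ => a + t*b) b t := by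
    intro t
    simpa using ((hasDerivAt_id t).mul_const b).const_add a
  have hgd : ∀ t : ℝ, t ∈ Set.Icc (0:ℝ) 1 → HasDerivAt g (g' t) t := by
    intro t ht
    have h1 : HasDerivAt (fun t : ℝ => |a + t*b| ^ (p-2) * (a + t*b))
        (((p-2) + 1) * |a + t*b| ^ (p-2) * b) t := by
      have := (hasDerivAt_abs_rpow'_mul (q := p-2) (hne t ht)).comp t (hinner t)
      simpa [Function.comp_def, mul_assoc] using this
    have h2 : HasDerivAt (fun t : ℝ => t * ((p-1) * |a| ^ (p-2) * b))
        ((p-1) * |a| ^ (p-2) * b) t := by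
      simpa using (hasDerivAt_id t).mul_const ((p-1) * |a| ^ (p-2) * b)
    have := h1.sub h2
    refine this.congr_deriv (Eq.symm ?_)
    ring
  obtain ⟨τ, hτ, hτeq⟩ := exists_hasDerivAt_eq_slope g g' zero_lt_one
    (fun t ht => ((hgd t ht).continuousAt).continuousWithinAt)
    (fun t ht => hgd t (Set.mem_Icc_of_Ioo ht))
  have hE : |a+b| ^ (p-2) * (a+b) - |a| ^ (p-2) * a - (p-1) * |a| ^ (p-2) * b
      = (p-1) * (|a + τ*b| ^ (p-2) - |a| ^ (p-2)) * b := by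
    have h10 : g 1 - g 0 = |a+b| ^ (p-2) * (a+b) - |a| ^ (p-2) * a - (p-1) * |a| ^ (p-2) * b := by
      simp only [hg, one_mul, zero_mul, mul_zero, add_zero, zero_add, sub_zero]
      ring
    rw [← h10]
    have h2 := hτeq
    rw [sub_zero, div_one] at h2
    rw [← h2]; simp only [hg']; ring
  -- second MVT for ψ t = |a + t*b| ^ (p-2) on [0, τ]
  set ψ : ℝ → ℝ := fun t => |a + t*b| ^ (p-2) with hψ
  set ψ' : ℝ → ℝ := fun t => (p-2) * |a + t*b| ^ (p-2-2) * (a + t*b) * b with hψ'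
  have hψd : ∀ t : ℝ, t ∈ Set.Icc (0:ℝ) 1 → HasDerivAt ψ (ψ' t) t := by
    intro t ht
    exact (hasDerivAt_abs_rpow' (q := p-2) (hne t ht)).comp t (hinner t)
  have hτI : τ ∈ Set.Icc (0:ℝ) 1 := Set.mem_Icc_of_Ioo hτ
  obtain ⟨σ, hσ, hσeq⟩ := exists_hasDerivAt_eq_slope ψ ψ' hτ.1
    (fun t ht => ((hψd t ⟨ht.1, le_trans ht.2 hτI.2⟩).continuousAt).continuousWithinAt)
    (fun t ht => hψd t ⟨le_of_lt ht.1, le_trans (le_of_lt ht.2) hτI.2⟩)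
  have hσI : σ ∈ Set.Icc (0:ℝ) 1 := ⟨hσ.1.le, le_trans hσ.2.le hτI.2⟩
  have hψdiff : ψ τ - ψ 0 = ψ' σ * τ := by
    rw [sub_zero] at hσeq
    have hτ0 : τ ≠ 0 := ne_of_gt hτ.1
    field_simp at hσeq
    linarith [hσeq]
  have hψ0 : ψ 0 = |a| ^ (p-2) := by simp [hψ]
  have habs : |ψ' σ| ≤ (p-2) * (2 ^ p * |a| ^ (p-3)) * |b| := by
    have hne' := hne σ hσI
    have h1 : |a + σ*b| ^ (p-2-2) * |a + σ*b| = |a + σ*b| ^ (p-3) := by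
      rw [← Real.rpow_add_one (abs_ne_zero.mpr hne')]; ring_nf
    have h2 : |a + σ*b| ^ (p-3) ≤ 2 ^ p * |a| ^ (p-3) :=
      rpow_window hp ha (hseg σ hσI).1 (hseg σ hσI).2
    calc |ψ' σ| = (p-2) * (|a + σ*b| ^ (p-2-2) * |a + σ*b|) * |b| := by
          simp only [hψ', abs_mul, abs_of_nonneg (le_of_lt (by linarith : (0:ℝ) < p-2)),
            abs_abs, abs_of_nonneg (Real.rpow_nonneg (abs_nonneg _) _)]
          ring
    _ = (p-2) * |a + σ*b| ^ (p-3) * |b| := by rw [h1]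
    _ ≤ (p-2) * (2 ^ p * |a| ^ (p-3)) * |b| := by
          apply mul_le_mul_of_nonneg_right _ (abs_nonneg b)
          exact mul_le_mul_of_nonneg_left h2 (by linarith)
  have hstep : abs (|a+b| ^ (p-2) * (a+b) - |a| ^ (p-2) * a - (p-1) * |a| ^ (p-2) * b)
      = |p-1| * |ψ' σ * τ| * |b| := by
    rw [hE, show |a + τ*b| ^ (p-2) - |a| ^ (p-2) = ψ τ - ψ 0 by rw [hψ0], hψdiff,
      abs_mul, abs_mul]
  have hτle : |ψ' σ * τ| ≤ (p-2) * (2 ^ p * |a| ^ (p-3)) * |b| := by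
    rw [abs_mul]
    calc |ψ' σ| * |τ| ≤ |ψ' σ| * 1 := by
          apply mul_le_mul_of_nonneg_left _ (abs_nonneg _)
          rw [abs_of_nonneg hτI.1]; exact hτI.2
    _ = |ψ' σ| := mul_one _
    _ ≤ _ := habs
  rw [hstep, abs_of_nonneg (show (0:ℝ) ≤ p-1 by linarith)]
  calc (p-1) * |ψ' σ * τ| * |b| ≤ (p-1) * ((p-2) * (2 ^ p * |a| ^ (p-3)) * |b|) * |b| := by
        apply mul_le_mul_of_nonneg_right _ (abs_nonneg b)
        exact mul_le_mul_of_nonneg_left hτle (by linarith)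
    _ = (p-1) * (p-2) * 2 ^ p * (|a| ^ (p-3) * b ^ 2) := by
        rw [show b ^ 2 = |b| * |b| from by rw [abs_mul_abs_self]; ring]
        ring

lemma abs_rpow_mul_abs {p : ℝ} (hp : 2 < p) (x : ℝ) : |x| ^ (p-2) * |x| = |x| ^ (p-1) := by
  rcases eq_or_ne x 0 with rfl | hx
  · rw [abs_zero, Real.zero_rpow (by linarith), Real.zero_rpow (by linarith), mul_zero]
  · rw [← Real.rpow_add_one (abs_ne_zero.mpr hx)]; ring_nf

lemma key_near {p a b : ℝ} (hp : 2 < p) (hab : |a| ≤ 2*|b|) :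
    abs (|a+b| ^ (p-2) * (a+b) - |a| ^ (p-2) * a - (p-1) * |a| ^ (p-2) * b)
      ≤ (3 ^ (p-1) + 2 ^ (p-1) + (p-1) * 2 ^ (p-1)) * |b| ^ (p-1) := by
  have hb : (0:ℝ) ≤ |b| := abs_nonneg b
  have h1 : abs (|a+b| ^ (p-2) * (a+b)) ≤ 3 ^ (p-1) * |b| ^ (p-1) := by
    rw [abs_mul, abs_of_nonneg (Real.rpow_nonneg (abs_nonneg _) _), abs_rpow_mul_abs hp]
    calc |a+b| ^ (p-1) ≤ (3*|b|) ^ (p-1) := by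
          apply Real.rpow_le_rpow (abs_nonneg _) _ (by linarith)
          calc |a+b| ≤ |a| + |b| := abs_add_le _ _
          _ ≤ 3*|b| := by linarith
    _ = 3 ^ (p-1) * |b| ^ (p-1) := Real.mul_rpow (by norm_num) hb
  have h2 : abs (|a| ^ (p-2) * a) ≤ 2 ^ (p-1) * |b| ^ (p-1) := by
    rw [abs_mul, abs_of_nonneg (Real.rpow_nonneg (abs_nonneg _) _), abs_rpow_mul_abs hp]
    calc |a| ^ (p-1) ≤ (2*|b|) ^ (p-1) :=
          Real.rpow_le_rpow (abs_nonneg _) hab (by linarith)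
    _ = 2 ^ (p-1) * |b| ^ (p-1) := Real.mul_rpow (by norm_num) hb
  have h3 : abs ((p-1) * |a| ^ (p-2) * b) ≤ (p-1) * 2 ^ (p-1) * |b| ^ (p-1) := by
    rw [abs_mul, abs_mul, abs_of_nonneg (show (0:ℝ) ≤ p-1 by linarith),
      abs_of_nonneg (Real.rpow_nonneg (abs_nonneg _) _)]
    have ha2 : |a| ^ (p-2) ≤ (2*|b|) ^ (p-2) :=
      Real.rpow_le_rpow (abs_nonneg _) hab (by linarith)
    have h4 : (2*|b|) ^ (p-2) * |b| ≤ 2 ^ (p-1) * |b| ^ (p-1) := by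
      rw [Real.mul_rpow (by norm_num) hb]
      calc 2 ^ (p-2) * |b| ^ (p-2) * |b| = 2 ^ (p-2) * (|b| ^ (p-2) * |b|) := by ring
      _ = 2 ^ (p-2) * |b| ^ (p-1) := by rw [abs_rpow_mul_abs hp]
      _ ≤ 2 ^ (p-1) * |b| ^ (p-1) := by
          apply mul_le_mul_of_nonneg_right
            (Real.rpow_le_rpow_of_exponent_le one_le_two (by linarith))
            (Real.rpow_nonneg hb _)
    calc (p-1) * |a| ^ (p-2) * |b| ≤ (p-1) * ((2*|b|) ^ (p-2) * |b|) := by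
          rw [mul_assoc]
          exact mul_le_mul_of_nonneg_left
            (mul_le_mul_of_nonneg_right ha2 hb) (by linarith)
    _ ≤ (p-1) * (2 ^ (p-1) * |b| ^ (p-1)) := by
          exact mul_le_mul_of_nonneg_left h4 (by linarith)
    _ = (p-1) * 2 ^ (p-1) * |b| ^ (p-1) := by ring
  calc abs (|a+b| ^ (p-2) * (a+b) - |a| ^ (p-2) * a - (p-1) * |a| ^ (p-2) * b)
      ≤ abs (|a+b| ^ (p-2) * (a+b)) + abs (|a| ^ (p-2) * a) + abs ((p-1) * |a| ^ (p-2) * b) :=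
        (abs_sub _ _).trans (by gcongr; exact abs_sub _ _)
  _ ≤ 3 ^ (p-1) * |b| ^ (p-1) + 2 ^ (p-1) * |b| ^ (p-1) + (p-1) * 2 ^ (p-1) * |b| ^ (p-1) := by
        gcongr
  _ = (3 ^ (p-1) + 2 ^ (p-1) + (p-1) * 2 ^ (p-1)) * |b| ^ (p-1) := by ring

noncomputable def nemCp (p : ℝ) : ℝ :=
  (p-1) * (p-2) * 2 ^ p + (3 ^ (p-1) + 2 ^ (p-1) + (p-1) * 2 ^ (p-1))

lemma nemCp_pos {p : ℝ} (hp : 2 < p) : 0 < nemCp p := by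
  unfold nemCp
  have h1 : (0:ℝ) < 2 ^ p := Real.rpow_pos_of_pos (by norm_num) _
  have h2 : (0:ℝ) < 2 ^ (p-1) := Real.rpow_pos_of_pos (by norm_num) _
  have h3 : (0:ℝ) < 3 ^ (p-1) := Real.rpow_pos_of_pos (by norm_num) _
  have h4 : (0:ℝ) ≤ (p-1) * (p-2) * 2 ^ p :=
    mul_nonneg (mul_nonneg (by linarith) (by linarith)) h1.le
  have h5 : (0:ℝ) ≤ (p-1) * 2 ^ (p-1) := mul_nonneg (by linarith) h2.le
  linarith

lemma ptA {p : ℝ} (h3 : 3 < p) (a b : ℝ) :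
    abs (|a+b| ^ (p-2) * (a+b) - |a| ^ (p-2) * a - (p-1) * |a| ^ (p-2) * b)
      ≤ nemCp p * (|a| ^ (p-3) * b ^ 2 + |b| ^ (p-1)) := by
  have hp : 2 < p := by linarith
  have h1 : (0:ℝ) ≤ |a| ^ (p-3) * b ^ 2 := by positivity
  have h2 : (0:ℝ) ≤ |b| ^ (p-1) := by positivity
  have hfar : (0:ℝ) ≤ (p-1) * (p-2) * 2 ^ p :=
    mul_nonneg (mul_nonneg (by linarith) (by linarith))
      (Real.rpow_pos_of_pos (by norm_num) _).le
  have hnear : (0:ℝ) ≤ 3 ^ (p-1) + 2 ^ (p-1) + (p-1) * 2 ^ (p-1) := by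
    have h2' : (0:ℝ) < 2 ^ (p-1) := Real.rpow_pos_of_pos (by norm_num) _
    have h3' : (0:ℝ) < 3 ^ (p-1) := Real.rpow_pos_of_pos (by norm_num) _
    have h5 : (0:ℝ) ≤ (p-1) * 2 ^ (p-1) := mul_nonneg (by linarith) h2'.le
    linarith
  rcases lt_or_ge (2*|b|) |a| with hc | hc
  · calc abs (|a+b| ^ (p-2) * (a+b) - |a| ^ (p-2) * a - (p-1) * |a| ^ (p-2) * b)
        ≤ (p-1) * (p-2) * 2 ^ p * (|a| ^ (p-3) * b ^ 2) := key_far hp hc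
    _ ≤ nemCp p * (|a| ^ (p-3) * b ^ 2 + |b| ^ (p-1)) := by
        unfold nemCp
        nlinarith [mul_nonneg hfar h2, mul_nonneg hnear h1, mul_nonneg hnear h2]
  · calc abs (|a+b| ^ (p-2) * (a+b) - |a| ^ (p-2) * a - (p-1) * |a| ^ (p-2) * b)
        ≤ (3 ^ (p-1) + 2 ^ (p-1) + (p-1) * 2 ^ (p-1)) * |b| ^ (p-1) := key_near hp hc
    _ ≤ nemCp p * (|a| ^ (p-3) * b ^ 2 + |b| ^ (p-1)) := by
        unfold nemCp
        nlinarith [mul_nonneg hfar h1, mul_nonneg hfar h2, mul_nonneg hnear h1]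

lemma ptB {p : ℝ} (hp : 2 < p) (h3 : p ≤ 3) (a b : ℝ) :
    abs (|a+b| ^ (p-2) * (a+b) - |a| ^ (p-2) * a - (p-1) * |a| ^ (p-2) * b)
      ≤ nemCp p * |b| ^ (p-1) := by
  have h2 : (0:ℝ) ≤ |b| ^ (p-1) := by positivity
  have hfar : (0:ℝ) ≤ (p-1) * (p-2) * 2 ^ p :=
    mul_nonneg (mul_nonneg (by linarith) (by linarith))
      (Real.rpow_pos_of_pos (by norm_num) _).le
  have hnear : (0:ℝ) ≤ 3 ^ (p-1) + 2 ^ (p-1) + (p-1) * 2 ^ (p-1) := by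
    have h2' : (0:ℝ) < 2 ^ (p-1) := Real.rpow_pos_of_pos (by norm_num) _
    have h3' : (0:ℝ) < 3 ^ (p-1) := Real.rpow_pos_of_pos (by norm_num) _
    have h5 : (0:ℝ) ≤ (p-1) * 2 ^ (p-1) := mul_nonneg (by linarith) h2'.le
    linarith
  rcases lt_or_ge (2*|b|) |a| with hc | hc
  · have hkey : |a| ^ (p-3) * b ^ 2 ≤ |b| ^ (p-1) := by
      rcases eq_or_ne b 0 with rfl | hb
      · rw [abs_zero, Real.zero_rpow (show p-1 ≠ 0 from by linarith)]
        norm_num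
      · have hb' : 0 < |b| := abs_pos.mpr hb
        have hba : |b| ≤ |a| := by linarith [abs_nonneg b]
        have hmono : |a| ^ (p-3) ≤ |b| ^ (p-3) := by
          rcases eq_or_lt_of_le h3 with rfl | h3'
          · norm_num
          · exact Real.rpow_le_rpow_of_nonpos hb' hba (by linarith)
        have hb2 : |b| ^ (p-3) * b ^ 2 = |b| ^ (p-1) := by
          rw [show b ^ 2 = |b| ^ ((2:ℕ):ℝ) from by rw [Real.rpow_natCast, sq_abs],
            ← Real.rpow_add hb']
          norm_num
          ring_nf
        calc |a| ^ (p-3) * b ^ 2 ≤ |b| ^ (p-3) * b ^ 2 := by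
              apply mul_le_mul_of_nonneg_right hmono (by positivity)
        _ = |b| ^ (p-1) := hb2
    calc abs (|a+b| ^ (p-2) * (a+b) - |a| ^ (p-2) * a - (p-1) * |a| ^ (p-2) * b)
        ≤ (p-1) * (p-2) * 2 ^ p * (|a| ^ (p-3) * b ^ 2) := key_far hp hc
    _ ≤ (p-1) * (p-2) * 2 ^ p * |b| ^ (p-1) := mul_le_mul_of_nonneg_left hkey hfar
    _ ≤ nemCp p * |b| ^ (p-1) := by
        unfold nemCp
        nlinarith [mul_nonneg hnear h2]
  · calc abs (|a+b| ^ (p-2) * (a+b) - |a| ^ (p-2) * a - (p-1) * |a| ^ (p-2) * b)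
        ≤ (3 ^ (p-1) + 2 ^ (p-1) + (p-1) * 2 ^ (p-1)) * |b| ^ (p-1) := key_near hp hc
    _ ≤ nemCp p * |b| ^ (p-1) := by
        unfold nemCp
        nlinarith [mul_nonneg hfar h2]

open MeasureTheory in
lemma elp_pow_eq {α : Type*} {m : MeasurableSpace α} (μ : Measure α) {p : ℝ} (hp : 2 < p)
    (h : α → ℝ) :
    eLpNorm (fun x => |h x| ^ (p-1)) (ENNReal.ofReal (p/(p-1))) μ
      = (eLpNorm h (ENNReal.ofReal p) μ) ^ (p-1) := by
  have h1 := eLpNorm_norm_rpow (p := ENNReal.ofReal (p/(p-1))) (μ := μ) h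
    (show (0:ℝ) < p-1 by linarith)
  have h2 : ENNReal.ofReal (p/(p-1)) * ENNReal.ofReal (p-1) = ENNReal.ofReal p := by
    rw [← ENNReal.ofReal_mul (div_nonneg (by linarith) (by linarith)), div_mul_cancel₀]
    linarith
  simp only [Real.norm_eq_abs] at h1
  rw [h1, h2]

open MeasureTheory in
lemma elp_holder {α : Type*} {m : MeasurableSpace α} {μ : Measure α} {p : ℝ} (h3 : 3 < p)
    {u h : α → ℝ} (hu : AEStronglyMeasurable u μ) (hh : AEStronglyMeasurable h μ) :
    eLpNorm (fun x => |u x| ^ (p-3) * (h x) ^ 2) (ENNReal.ofReal (p/(p-1))) μ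
      ≤ (eLpNorm u (ENNReal.ofReal p) μ) ^ (p-3)
        * (eLpNorm h (ENNReal.ofReal p) μ) ^ (2:ℝ) := by
  have hp0 : (0:ℝ) < p := by linarith
  set φ : α → ℝ := fun x => |u x| ^ (p-3) with hφdef
  set f : α → ℝ := fun x => (h x) ^ 2 with hfdef
  have hφm : AEStronglyMeasurable φ μ :=
    (continuous_abs.rpow_const (fun _ => Or.inr (by linarith))).comp_aestronglyMeasurable hu
  have hfm : AEStronglyMeasurable f μ := by
    have := hh.mul hh
    simpa [hfdef, sq, Pi.mul_def] using this
  have hpqr : 1 / ENNReal.ofReal (p/(p-1)) =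
      1 / ENNReal.ofReal (p/(p-3)) + 1 / ENNReal.ofReal (p/2) := by
    rw [one_div, one_div, one_div,
      ← ENNReal.ofReal_inv_of_pos (div_pos (by linarith) (by linarith)),
      ← ENNReal.ofReal_inv_of_pos (div_pos (by linarith) (by linarith)),
      ← ENNReal.ofReal_inv_of_pos (div_pos (by linarith) (by norm_num)),
      ← ENNReal.ofReal_add (inv_nonneg.mpr (div_nonneg (by linarith) (by linarith)))
        (inv_nonneg.mpr (div_nonneg (by linarith) (by norm_num)))]
    congr 1
    rw [inv_div, inv_div, inv_div, ← add_div]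
    congr 1
    ring
  have holder := eLpNorm_smul_le_mul_eLpNorm (μ := μ) (𝕜 := ℝ)
    (p := ENNReal.ofReal (p/(p-3))) (q := ENNReal.ofReal (p/2))
    (r := ENNReal.ofReal (p/(p-1))) hfm hφm (hpqr := ⟨by simpa only [one_div] using hpqr.symm⟩)
  have hsmul : φ • f = fun x => |u x| ^ (p-3) * (h x) ^ 2 := rfl
  rw [hsmul] at holder
  refine holder.trans ?_
  have e1 : eLpNorm φ (ENNReal.ofReal (p/(p-3))) μ
      = (eLpNorm u (ENNReal.ofReal p) μ) ^ (p-3) := by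
    have h1 := eLpNorm_norm_rpow (p := ENNReal.ofReal (p/(p-3))) (μ := μ) u
      (show (0:ℝ) < p-3 by linarith)
    have h2 : ENNReal.ofReal (p/(p-3)) * ENNReal.ofReal (p-3) = ENNReal.ofReal p := by
      rw [← ENNReal.ofReal_mul (div_nonneg (by linarith) (by linarith)), div_mul_cancel₀]
      linarith
    simp only [Real.norm_eq_abs] at h1
    rw [hφdef, h1, h2]
  have e2 : eLpNorm f (ENNReal.ofReal (p/2)) μ
      = (eLpNorm h (ENNReal.ofReal p) μ) ^ (2:ℝ) := by
    have h1 := eLpNorm_norm_rpow (p := ENNReal.ofReal (p/2)) (μ := μ) h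
      (show (0:ℝ) < 2 by norm_num)
    have h2 : ENNReal.ofReal (p/2) * ENNReal.ofReal 2 = ENNReal.ofReal p := by
      rw [← ENNReal.ofReal_mul (div_nonneg (by linarith) (by norm_num)), div_mul_cancel₀]
      norm_num
    simp only [Real.norm_eq_abs] at h1
    have hf2 : f = fun x => |h x| ^ (2:ℝ) := by
      funext x
      rw [hfdef]
      rw [show ((2:ℝ)) = ((2:ℕ):ℝ) from by norm_num, Real.rpow_natCast, sq_abs]
    rw [hf2, h1, h2]
  rw [e1, e2]


open MeasureTheory

/-- Fréchet differentiability of the Nemytskii operator `u ↦ |u|^{p-2}u` from `L^p` to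
`L^{p/(p-1)}`: `‖|u+h|^{p-2}(u+h) - |u|^{p-2}u - (p-1)|u|^{p-2}h‖_{L^{p/(p-1)}} = o(‖h‖_{L^p})`
as `‖h‖_{L^p} → 0`. -/
theorem stmt_18 (n : ℕ) (hn : 1 ≤ n) (p : ℝ) (hp : 2 < p)
    (u : EuclideanSpace ℝ (Fin n) → ℝ) (hu : MemLp u (ENNReal.ofReal p) volume) :
    ∀ ε : ℝ, 0 < ε → ∃ δ : ℝ, 0 < δ ∧
      ∀ h : EuclideanSpace ℝ (Fin n) → ℝ, MemLp h (ENNReal.ofReal p) volume →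
        eLpNorm h (ENNReal.ofReal p) volume ≤ ENNReal.ofReal δ →
        eLpNorm (fun x => |u x + h x| ^ (p - 2) * (u x + h x)
            - |u x| ^ (p - 2) * u x - (p - 1) * |u x| ^ (p - 2) * h x)
          (ENNReal.ofReal (p / (p - 1))) volume
          ≤ ENNReal.ofReal ε * eLpNorm h (ENNReal.ofReal p) volume := by
  intro ε hε
  have hC : 0 < nemCp p := nemCp_pos hp
  set C : ℝ := nemCp p with hCdef
  set P : ℝ≥0∞ := ENNReal.ofReal p with hPdef
  set P' : ℝ≥0∞ := ENNReal.ofReal (p/(p-1)) with hP'def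
  have hMlt : eLpNorm u P volume < ⊤ := hu.2
  set M : ℝ := (eLpNorm u P volume).toReal with hMdef
  have hMnn : 0 ≤ M := ENNReal.toReal_nonneg
  set Mp : ℝ := M ^ (p-3) with hMpdef
  have hMpnn : 0 ≤ Mp := Real.rpow_nonneg hMnn _
  set δ1 : ℝ := (ε/(2*C)) ^ (p-2)⁻¹ with hδ1def
  set δ2 : ℝ := ε/(2*C*(Mp+1)) with hδ2def
  have hδ1pos : 0 < δ1 := Real.rpow_pos_of_pos (by positivity) _
  have hδ2pos : 0 < δ2 := by positivity
  refine ⟨min δ1 δ2, lt_min hδ1pos hδ2pos, ?_⟩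
  set δ : ℝ := min δ1 δ2 with hδdef
  have hδpos : 0 < δ := lt_min hδ1pos hδ2pos
  have hδe1 : C * δ ^ (p-2) ≤ ε/2 := by
    have h1 : δ ^ (p-2) ≤ δ1 ^ (p-2) :=
      Real.rpow_le_rpow hδpos.le (min_le_left _ _) (by linarith)
    have h2 : δ1 ^ (p-2) = ε/(2*C) := Real.rpow_inv_rpow (by positivity) (by linarith)
    have h3 : C * (ε/(2*C)) = ε/2 := by field_simp
    calc C * δ ^ (p-2) ≤ C * (ε/(2*C)) := by
          rw [← h2]; exact mul_le_mul_of_nonneg_left h1 hC.le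
    _ = ε/2 := h3
  have hδe2 : C * (Mp * δ) ≤ ε/2 := by
    have h1 : C * (Mp * δ) ≤ C * (Mp * δ2) := by
      apply mul_le_mul_of_nonneg_left _ hC.le
      exact mul_le_mul_of_nonneg_left (min_le_right _ _) hMpnn
    have h2 : C * (Mp * δ2) = ε/2 * (Mp/(Mp+1)) := by
      rw [hδ2def]; field_simp
    have h3 : Mp/(Mp+1) ≤ 1 := by
      rw [div_le_one (by linarith)]; linarith
    calc C * (Mp * δ) ≤ ε/2 * (Mp/(Mp+1)) := h1.trans_eq h2
    _ ≤ ε/2 * 1 := mul_le_mul_of_nonneg_left h3 (by linarith)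
    _ = ε/2 := mul_one _
  intro h hh hδle
  set N : ℝ≥0∞ := eLpNorm h P volume with hNdef
  have hNtop : N ≠ ⊤ := (lt_of_le_of_lt hδle ENNReal.ofReal_lt_top).ne
  by_cases hN0 : N = 0
  · -- h vanishes a.e., so the whole expression vanishes a.e.
    have hP0 : P ≠ 0 := (ENNReal.ofReal_pos.mpr (by linarith)).ne'
    have hhz : h =ᵐ[volume] 0 := (eLpNorm_eq_zero_iff hh.1 hP0).mp hN0
    have hRz : (fun x => |u x + h x| ^ (p - 2) * (u x + h x)
        - |u x| ^ (p - 2) * u x - (p - 1) * |u x| ^ (p - 2) * h x) =ᵐ[volume] 0 := by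
      filter_upwards [hhz] with x hx
      simp [hx]
    rw [eLpNorm_congr_ae hRz, eLpNorm_zero]
    exact zero_le
  -- measurability facts
  have hum := hu.1
  have hhm := hh.1
  have habscont : Continuous fun y : ℝ => |y| ^ (p-2) :=
    continuous_abs.rpow_const (fun _ => Or.inr (by linarith))
  have hΦcont : Continuous fun y : ℝ => |y| ^ (p-2) * y := habscont.mul continuous_id
  have A1 : AEStronglyMeasurable (fun x => |u x + h x| ^ (p-2) * (u x + h x)) volume :=
    hΦcont.comp_aestronglyMeasurable (hum.add hhm)
  have A2 : AEStronglyMeasurable (fun x => |u x| ^ (p-2) * u x) volume :=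
    hΦcont.comp_aestronglyMeasurable hum
  have g1 : AEStronglyMeasurable (fun x => |u x| ^ (p-2)) volume :=
    habscont.comp_aestronglyMeasurable hum
  have A3 : AEStronglyMeasurable (fun x => (p-1) * |u x| ^ (p-2) * h x) volume :=
    (g1.const_mul (p-1)).mul hhm
  have hRm : AEStronglyMeasurable (fun x => |u x + h x| ^ (p - 2) * (u x + h x)
      - |u x| ^ (p - 2) * u x - (p - 1) * |u x| ^ (p - 2) * h x) volume :=
    (A1.sub A2).sub A3
  have hP'1 : (1:ℝ≥0∞) ≤ P' := by
    rw [hP'def, ENNReal.one_le_ofReal, le_div_iff₀ (by linarith)]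
    linarith
  -- basic power manipulations on N
  have hNp1 : N ^ (p-1) ≤ ENNReal.ofReal (δ ^ (p-2)) * N := by
    have e1 : N ^ (p-1) = N ^ (p-2) * N := by
      rw [show p-1 = (p-2) + 1 by ring, ENNReal.rpow_add _ _ hN0 hNtop, ENNReal.rpow_one]
    rw [e1]
    apply mul_le_mul_left
    calc N ^ (p-2) ≤ (ENNReal.ofReal δ) ^ (p-2) :=
          ENNReal.rpow_le_rpow hδle (by linarith)
    _ = ENNReal.ofReal (δ ^ (p-2)) := ENNReal.ofReal_rpow_of_nonneg hδpos.le (by linarith)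
  rcases le_or_gt p 3 with h3 | h3
  · -- 2 < p ≤ 3 : single-term bound
    have hmono : eLpNorm (fun x => |u x + h x| ^ (p - 2) * (u x + h x)
        - |u x| ^ (p - 2) * u x - (p - 1) * |u x| ^ (p - 2) * h x) P' volume
        ≤ eLpNorm (fun x => C * |h x| ^ (p-1)) P' volume := by
      apply eLpNorm_mono
      intro x
      rw [Real.norm_eq_abs, Real.norm_eq_abs]
      refine (ptB hp h3 (u x) (h x)).trans (le_abs_self _)
    have hconst : eLpNorm (fun x => C * |h x| ^ (p-1)) P' volume
        = ENNReal.ofReal C * eLpNorm (fun x => |h x| ^ (p-1)) P' volume := by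
      have e : (fun x => C * |h x| ^ (p-1)) = C • (fun x => |h x| ^ (p-1)) := rfl
      rw [e, eLpNorm_const_smul, Real.enorm_eq_ofReal hC.le]
    calc eLpNorm _ P' volume ≤ ENNReal.ofReal C * eLpNorm (fun x => |h x| ^ (p-1)) P' volume :=
          hmono.trans_eq hconst
    _ = ENNReal.ofReal C * N ^ (p-1) := by rw [elp_pow_eq volume hp h]
    _ ≤ ENNReal.ofReal C * (ENNReal.ofReal (δ ^ (p-2)) * N) := mul_le_mul_right hNp1 _
    _ = ENNReal.ofReal (C * δ ^ (p-2)) * N := by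
        rw [← mul_assoc, ← ENNReal.ofReal_mul hC.le]
    _ ≤ ENNReal.ofReal ε * N := by
        apply mul_le_mul_left
        exact ENNReal.ofReal_le_ofReal (by linarith)
  · -- 3 < p : two-term bound
    have T1m : AEStronglyMeasurable (fun x => |u x| ^ (p-3) * (h x) ^ 2) volume := by
      have c1 : Continuous fun y : ℝ => |y| ^ (p-3) :=
        continuous_abs.rpow_const (fun _ => Or.inr (by linarith))
      have m1 := c1.comp_aestronglyMeasurable hum
      have m2 : AEStronglyMeasurable (fun x => (h x) ^ 2) volume := by
        simpa [sq, Pi.mul_def] using hhm.mul hhm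
      exact m1.mul m2
    have T2m : AEStronglyMeasurable (fun x => |h x| ^ (p-1)) volume :=
      (continuous_abs.rpow_const (fun _ => Or.inr (by linarith))).comp_aestronglyMeasurable hhm
    have hmono : eLpNorm (fun x => |u x + h x| ^ (p - 2) * (u x + h x)
        - |u x| ^ (p - 2) * u x - (p - 1) * |u x| ^ (p - 2) * h x) P' volume
        ≤ eLpNorm (fun x => C * (|u x| ^ (p-3) * (h x) ^ 2 + |h x| ^ (p-1))) P' volume := by
      apply eLpNorm_mono
      intro x
      rw [Real.norm_eq_abs, Real.norm_eq_abs]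
      refine (ptA h3 (u x) (h x)).trans (le_abs_self _)
    have hconst : eLpNorm (fun x => C * (|u x| ^ (p-3) * (h x) ^ 2 + |h x| ^ (p-1))) P' volume
        = ENNReal.ofReal C
          * eLpNorm (fun x => |u x| ^ (p-3) * (h x) ^ 2 + |h x| ^ (p-1)) P' volume := by
      have e : (fun x => C * (|u x| ^ (p-3) * (h x) ^ 2 + |h x| ^ (p-1)))
          = C • (fun x => |u x| ^ (p-3) * (h x) ^ 2 + |h x| ^ (p-1)) := rfl
      rw [e, eLpNorm_const_smul, Real.enorm_eq_ofReal hC.le]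
    have hadd : eLpNorm (fun x => |u x| ^ (p-3) * (h x) ^ 2 + |h x| ^ (p-1)) P' volume
        ≤ eLpNorm (fun x => |u x| ^ (p-3) * (h x) ^ 2) P' volume
          + eLpNorm (fun x => |h x| ^ (p-1)) P' volume :=
      eLpNorm_add_le T1m T2m hP'1
    have hU : eLpNorm u P volume = ENNReal.ofReal M := (ENNReal.ofReal_toReal hMlt.ne).symm
    have hT1 : eLpNorm (fun x => |u x| ^ (p-3) * (h x) ^ 2) P' volume
        ≤ ENNReal.ofReal (Mp * δ) * N := by
      refine (elp_holder h3 hum hhm).trans ?_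
      have e2 : N ^ (2:ℝ) ≤ ENNReal.ofReal δ * N := by
        have : N ^ (2:ℝ) = N * N := by
          rw [show ((2:ℝ)) = ((2:ℕ):ℝ) from by norm_num, ENNReal.rpow_natCast, sq]
        rw [this]
        exact mul_le_mul_left hδle _
      calc (eLpNorm u P volume) ^ (p-3) * N ^ (2:ℝ)
          = ENNReal.ofReal Mp * N ^ (2:ℝ) := by
            rw [hU, ENNReal.ofReal_rpow_of_nonneg hMnn (by linarith), hMpdef]
      _ ≤ ENNReal.ofReal Mp * (ENNReal.ofReal δ * N) := mul_le_mul_right e2 _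
      _ = ENNReal.ofReal (Mp * δ) * N := by
            rw [← mul_assoc, ← ENNReal.ofReal_mul hMpnn]
    have hT2 : eLpNorm (fun x => |h x| ^ (p-1)) P' volume
        ≤ ENNReal.ofReal (δ ^ (p-2)) * N := by
      rw [elp_pow_eq volume hp h]
      exact hNp1
    calc eLpNorm _ P' volume
        ≤ ENNReal.ofReal C
          * eLpNorm (fun x => |u x| ^ (p-3) * (h x) ^ 2 + |h x| ^ (p-1)) P' volume :=
          hmono.trans_eq hconst
    _ ≤ ENNReal.ofReal C * (ENNReal.ofReal (Mp * δ) * N + ENNReal.ofReal (δ ^ (p-2)) * N) :=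
          mul_le_mul_right (hadd.trans (add_le_add hT1 hT2)) _
    _ = ENNReal.ofReal (C * (Mp * δ + δ ^ (p-2))) * N := by
          rw [← add_mul, ← ENNReal.ofReal_add (by positivity)
            (Real.rpow_nonneg hδpos.le _), ← mul_assoc, ← ENNReal.ofReal_mul hC.le]
    _ ≤ ENNReal.ofReal ε * N := by
          apply mul_le_mul_left
          apply ENNReal.ofReal_le_ofReal
          have : C * (Mp * δ + δ ^ (p-2)) = C * (Mp * δ) + C * δ ^ (p-2) := by ring
          linarith [hδe1, hδe2, this.le]
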